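/- Let Ω be a finite set and Ω± = {+,−} × Ω, with the sign-flip permutation −Id ∈ Sym(Ω±) sending (s, x) to (−s, x). For every permutation ζ ∈ Sym(Ω±) there exists σ ∈ Sym(Ω±) commuting with −Id such that d_H(σ, ζ) ≤ d_H([−Id, ζ], Id), where [a,b] = aba⁻¹b⁻¹ and d_H is the normalized Hamming metric on Sym(Ω±). -/

import Mathlib

/-- Normalized Hamming distance on `Sym(Ω)` for a finite type `Ω`. -/
noncomputable def dHp {Ω : Type*} [Fintype Ω] [DecidableEq Ω] (a b : Equiv.Perm Ω) : ℝ :=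
  ((Finset.univ.filter fun x : Ω => a x ≠ b x).card : ℝ) / Fintype.card Ω

/-- The sign flip `-Id` on `Ω± = {+,−} × Ω` (signs modeled by `Bool`). -/
def negId (Ω : Type*) : Equiv.Perm (Bool × Ω) :=
  Function.Involutive.toPerm (fun p => (!p.1, p.2)) (fun p => by simp)

lemma negId_apply {Ω : Type*} (p : Bool × Ω) : negId Ω p = (!p.1, p.2) := rfl

lemma negId_inv_apply {Ω : Type*} (p : Bool × Ω) : (negId Ω)⁻¹ p = (!p.1, p.2) := rfl

/-- Extend a map injective on a finset to a permutation. -/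
lemma exists_perm_extend {α : Type*} [Fintype α] [DecidableEq α] (S : Finset α) (f : α → α)
    (hf : Set.InjOn f ↑S) : ∃ π : Equiv.Perm α, ∀ x ∈ S, π x = f x := by
  classical
  have hcard : (S.image f).card = S.card := Finset.card_image_of_injOn hf
  let g : {a // a ∈ S} → {a // a ∈ S.image f} :=
    fun a => ⟨f a, Finset.mem_image_of_mem f a.2⟩
  have hg_inj : Function.Injective g := by
    intro a b h
    exact Subtype.ext (hf a.2 b.2 (congrArg Subtype.val h))
  have hg_surj : Function.Surjective g := by
    rintro ⟨b, hb⟩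
    obtain ⟨a, ha, rfl⟩ := Finset.mem_image.1 hb
    exact ⟨⟨a, ha⟩, rfl⟩
  have hcc : Fintype.card {a // ¬ a ∈ S} = Fintype.card {a // ¬ a ∈ S.image f} := by
    rw [Fintype.card_subtype_compl, Fintype.card_subtype_compl,
      Fintype.card_coe, Fintype.card_coe, hcard]
  let e2 : {a // ¬ a ∈ S} ≃ {a // ¬ a ∈ S.image f} := Fintype.equivOfCardEq hcc
  refine ⟨(Equiv.sumCompl (fun a => a ∈ S)).symm.trans
    ((Equiv.sumCongr (Equiv.ofBijective g ⟨hg_inj, hg_surj⟩) e2).trans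
      (Equiv.sumCompl (fun a => a ∈ S.image f))), ?_⟩
  intro x hx
  simp [Equiv.sumCompl_symm_apply_of_pos (p := fun a => a ∈ S) hx, g]
  rfl

/-- The skew product permutation of `Bool × Ω` built from `π : Perm Ω` and a sign
function `ε : Ω → Bool`. -/
def skew {Ω : Type*} (π : Equiv.Perm Ω) (ε : Ω → Bool) : Equiv.Perm (Bool × Ω) where
  toFun p := (xor (!p.1) (ε p.2), π p.2)
  invFun p := (xor (!p.1) (ε (π.symm p.2)), π.symm p.2)
  left_inv := by
    rintro ⟨s, x⟩
    simp only [Equiv.symm_apply_apply]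
    cases s <;> cases hb : ε x <;> simp [hb]
  right_inv := by
    rintro ⟨s, x⟩
    simp only [Equiv.apply_symm_apply]
    cases s <;> cases hb : ε (π.symm x) <;> simp [hb]

lemma skew_apply {Ω : Type*} (π : Equiv.Perm Ω) (ε : Ω → Bool) (p : Bool × Ω) :
    skew π ε p = (xor (!p.1) (ε p.2), π p.2) := rfl

theorem stmt4 {Ω : Type*} [Fintype Ω] [DecidableEq Ω] (ζ : Equiv.Perm (Bool × Ω)) :
    ∃ σ : Equiv.Perm (Bool × Ω), σ * negId Ω = negId Ω * σ ∧
      dHp σ ζ ≤ dHp (negId Ω * ζ * (negId Ω)⁻¹ * ζ⁻¹) 1 := by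
  classical
  have hτ2 : ∀ p : Bool × Ω, negId Ω (negId Ω p) = p := by
    intro p; rw [negId_apply, negId_apply]; simp
  -- the "good" set: points whose pair is mapped equivariantly
  set S : Finset Ω := Finset.univ.filter (fun x => ζ (false, x) = negId Ω (ζ (true, x)))
    with hS
  have hmemS : ∀ x : Ω, x ∈ S ↔ ζ (false, x) = negId Ω (ζ (true, x)) := by
    intro x; simp [hS]
  have hinj : Set.InjOn (fun x => (ζ (true, x)).2) ↑S := by
    intro x hx y hy hxy
    have hx' := (hmemS x).1 hx
    have hy' := (hmemS y).1 hy
    simp only at hxy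
    by_cases h1 : (ζ (true, x)).1 = (ζ (true, y)).1
    · have : ζ (true, x) = ζ (true, y) := Prod.ext h1 hxy
      have := ζ.injective this
      exact (Prod.mk.injEq _ _ _ _ ▸ this).2
    · exfalso
      have h1' : (ζ (true, x)).1 = !(ζ (true, y)).1 := by
        cases hb : (ζ (true, x)).1 <;> cases hc : (ζ (true, y)).1 <;>
          simp_all
      have : ζ (true, x) = negId Ω (ζ (true, y)) := by
        rw [negId_apply]
        exact Prod.ext h1' hxy
      rw [← hy'] at this
      have := ζ.injective this
      simp at this
  obtain ⟨π, hπ⟩ := exists_perm_extend S (fun x => (ζ (true, x)).2) hinj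
  set ε : Ω → Bool := fun x => (ζ (true, x)).1 with hε
  refine ⟨skew π ε, ?_, ?_⟩
  · -- commutation
    apply Equiv.ext
    rintro ⟨s, x⟩
    simp only [Equiv.Perm.mul_apply, skew_apply, negId_apply]
    cases s <;> cases hb : ε x <;> simp [hb]
  · -- distance bound
    -- if a point's pair is good then σ agrees with ζ there
    have hgood : ∀ y : Bool × Ω, ζ (negId Ω y) = negId Ω (ζ y) → skew π ε y = ζ y := by
      rintro ⟨s, x⟩ h
      cases s
      · -- s = false : derive goodness of x
        have hx : x ∈ S := by
          rw [hmemS]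
          simp only [negId_apply, Bool.not_false] at h
          rw [h, negId_apply]
          simp
        have hxg := (hmemS x).1 hx
        simp [skew_apply, hπ x hx, hε, hxg, negId_apply]
      · -- s = true
        have hx : x ∈ S := by
          rw [hmemS]
          simp only [negId_apply, Bool.not_true] at h
          exact h
        simp [skew_apply, hπ x hx, hε]
    -- counting
    set c : Equiv.Perm (Bool × Ω) := negId Ω * ζ * (negId Ω)⁻¹ * ζ⁻¹ with hc
    have key : (Finset.univ.filter fun y : Bool × Ω => skew π ε y ≠ ζ y).card ≤
        (Finset.univ.filter fun y : Bool × Ω => c y ≠ y).card := by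
      have hsub : (Finset.univ.filter fun y : Bool × Ω => skew π ε y ≠ ζ y) ⊆
          (Finset.univ.filter fun y : Bool × Ω => ζ (negId Ω y) ≠ negId Ω (ζ y)) := by
        intro y hy
        simp only [Finset.mem_filter, Finset.mem_univ, true_and] at hy ⊢
        intro h
        exact hy (hgood y h)
      have hbij : (Finset.univ.filter fun y : Bool × Ω =>
          ζ (negId Ω y) ≠ negId Ω (ζ y)).card =
          (Finset.univ.filter fun y : Bool × Ω => c y ≠ y).card := by
        apply Finset.card_bij' (fun y _ => ζ y) (fun y _ => ζ⁻¹ y)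
        · intro y hy
          simp only [Finset.mem_filter, Finset.mem_univ, true_and] at hy ⊢
          intro h
          apply hy
          have h2 : c (ζ y) = negId Ω (ζ (negId Ω y)) := by
            simp only [hc, Equiv.Perm.mul_apply, (Equiv.Perm.inv_eq_iff_eq.mpr rfl : ζ⁻¹ (ζ y) = y),
              negId_inv_apply, negId_apply]
          rw [h2] at h
          have h3 := congrArg (negId Ω) h
          rw [hτ2] at h3
          exact h3
        · intro y hy
          simp only [Finset.mem_filter, Finset.mem_univ, true_and] at hy ⊢
          intro h
          apply hy
          have h2 : c y = negId Ω (ζ (negId Ω (ζ⁻¹ y))) := by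
            simp only [hc, Equiv.Perm.mul_apply, negId_inv_apply, negId_apply]
          rw [h2, h, hτ2, ((Equiv.eq_symm_apply ζ).mp rfl : ζ (ζ⁻¹ y) = y)]
        · intro y _; exact ζ.symm_apply_apply y
        · intro y _; exact ζ.apply_symm_apply y
      calc (Finset.univ.filter fun y : Bool × Ω => skew π ε y ≠ ζ y).card
          ≤ (Finset.univ.filter fun y : Bool × Ω =>
              ζ (negId Ω y) ≠ negId Ω (ζ y)).card := Finset.card_le_card hsub
        _ = _ := hbij
    unfold dHp
    simp only [Equiv.Perm.one_apply, ← hc]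
    rcases Nat.eq_zero_or_pos (Fintype.card (Bool × Ω)) with h0 | h0
    · rw [h0]; simp
    · have hpos : (0 : ℝ) < Fintype.card (Bool × Ω) := by exact_mod_cast h0
      rw [div_le_div_iff_of_pos_right hpos]
      exact_mod_cast key
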